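/- If β ≥ γ ≥ 0 and β + γ > 1, then for all integers k₁, k₂, the sum over n ∈ ℤ of 1/(⟨n-k₁⟩^β ⟨n-k₂⟩^γ) is bounded by C · φ_β(k₁-k₂)/⟨k₁-k₂⟩^γ, where φ_β(k) = Σ_{|n|≤|k|} ⟨n⟩^{-β} and ⟨n⟩ = (1+n²)^{1/2}, with C depending only on β, γ. -/

import Mathlib

open scoped BigOperators

/-- Japanese bracket `⟨x⟩ = (1+x²)^{1/2}`. -/
noncomputable def jb (x : ℝ) : ℝ := Real.sqrt (1 + x ^ 2)

/-- `φ_β(k) = Σ_{|n| ≤ |k|} ⟨n⟩^{-β}`. -/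
noncomputable def phiB (β : ℝ) (k : ℤ) : ℝ :=
  ∑ n ∈ Finset.Icc (-|k|) |k|, jb (n : ℝ) ^ (-β)



lemma jb_nonneg (x : ℝ) : 0 ≤ jb x := Real.sqrt_nonneg _

lemma one_le_jb (x : ℝ) : 1 ≤ jb x := by
  have h := Real.sqrt_le_sqrt (show (1:ℝ) ≤ 1 + x ^ 2 by nlinarith [sq_nonneg x])
  simpa [jb] using h

lemma jb_pos (x : ℝ) : 0 < jb x := lt_of_lt_of_le one_pos (one_le_jb x)

lemma abs_le_jb (x : ℝ) : |x| ≤ jb x := by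
  rw [jb, show |x| = Real.sqrt (x^2) by rw [Real.sqrt_sq_eq_abs]]
  exact Real.sqrt_le_sqrt (by nlinarith)

lemma jb_mono {x y : ℝ} (h : |x| ≤ |y|) : jb x ≤ jb y := by
  apply Real.sqrt_le_sqrt
  have := sq_abs x; have := sq_abs y
  nlinarith [abs_nonneg x, abs_nonneg y]

lemma jb_abs (x : ℝ) : jb |x| = jb x := by rw [jb, jb, sq_abs]

lemma jb_le_two_mul {x k : ℝ} (h : |k| ≤ 2 * |x|) : jb k ≤ 2 * jb x := by
  simp only [jb]
  rw [show (2:ℝ) * Real.sqrt (1 + x^2) = Real.sqrt (4 * (1 + x^2)) by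
    rw [Real.sqrt_mul (by norm_num), show Real.sqrt 4 = 2 by
      rw [show (4:ℝ) = 2^2 by norm_num, Real.sqrt_sq (by norm_num)]]]
  apply Real.sqrt_le_sqrt
  have h2 : k^2 ≤ 4 * x^2 := by
    have := sq_abs k; have := sq_abs x
    nlinarith [abs_nonneg k, abs_nonneg x]
  nlinarith



lemma CI {s : ℝ} (hs : 1 < s) {a : ℝ} (ha : 1 ≤ a) :
    (s - 1) * (a + 1) ^ (-s) ≤ a ^ (1 - s) - (a + 1) ^ (1 - s) := by
  have ha0 : (0:ℝ) < a := by linarith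
  have hb0 : (0:ℝ) < a + 1 := by linarith
  have hber : 1 + s * (1/a) ≤ (1 + 1/a) ^ s :=
    one_add_mul_self_le_rpow_one_add
      (by have := one_div_nonneg.mpr ha0.le; linarith) hs.le
  have h2 : (1 : ℝ) + 1/a = (a+1)/a := by field_simp
  rw [h2] at hber
  have key : (a + s) * (a+1) ^ (-s) ≤ a * a ^ (-s) := by
    have h3 : a * ((a+1)/a) ^ s * (a+1) ^ (-s) = a * a ^ (-s) := by
      rw [Real.div_rpow hb0.le ha0.le, Real.rpow_neg hb0.le, Real.rpow_neg ha0.le]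
      have hbs : (a+1) ^ s ≠ 0 := ne_of_gt (Real.rpow_pos_of_pos hb0 s)
      have has : a ^ s ≠ 0 := ne_of_gt (Real.rpow_pos_of_pos ha0 s)
      field_simp
    calc (a + s) * (a+1) ^ (-s) = (1 + s * (1/a)) * a * (a+1) ^ (-s) := by
            field_simp
      _ ≤ ((a+1)/a) ^ s * a * (a+1) ^ (-s) := by
            apply mul_le_mul_of_nonneg_right _ (Real.rpow_nonneg hb0.le _)
            exact mul_le_mul_of_nonneg_right hber ha0.le
      _ = a * a ^ (-s) := by rw [← h3]; ring
  have e1 : a ^ (1 - s) = a * a ^ (-s) := by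
    rw [show (1:ℝ) - s = 1 + (-s) by ring, Real.rpow_add ha0, Real.rpow_one]
  have e2 : (a+1) ^ (1 - s) = (a+1) * (a+1) ^ (-s) := by
    rw [show (1:ℝ) - s = 1 + (-s) by ring, Real.rpow_add hb0, Real.rpow_one]
  have hr : (s-1) * (a+1)^(-s) + (a+1) * (a+1)^(-s) = (a+s) * (a+1)^(-s) := by ring
  linarith

lemma tail_pos {s : ℝ} (hs : 1 < s) {L : ℤ} (hL : 1 ≤ L) (F : Finset ℤ)
    (hF : ∀ m ∈ F, L < m) :
    ∑ m ∈ F, (m : ℝ) ^ (-s) ≤ (L : ℝ) ^ (1-s) / (s-1) := by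
  have hs1 : (0:ℝ) < s - 1 := by linarith
  have hL1 : (1:ℝ) ≤ (L:ℝ) := by exact_mod_cast hL
  set f : ℕ → ℝ := fun i => ((L : ℝ) + i) ^ (1-s) / (s-1) with hf
  have hfnn : ∀ i, 0 ≤ f i := by
    intro i
    apply div_nonneg _ hs1.le
    apply Real.rpow_nonneg
    positivity
  have hdiff : ∀ i : ℕ, 0 ≤ f i - f (i+1) := by
    intro i
    have hL0 : (0:ℝ) < (L:ℝ) + i := by positivity
    have h1 : ((L:ℝ) + (i+1:ℕ)) ^ (1-s) ≤ ((L:ℝ) + i) ^ (1-s) := by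
      apply Real.rpow_le_rpow_of_nonpos hL0 (by push_cast; linarith) (by linarith)
    have e : f i - f (i+1) = (((L:ℝ)+i)^(1-s) - ((L:ℝ)+(i+1:ℕ))^(1-s))/(s-1) := by
      simp only [hf]; ring
    rw [e]
    apply div_nonneg (by linarith) hs1.le
  set idx : ℤ → ℕ := fun m => (m - L - 1).toNat with hidx
  obtain ⟨n, hn⟩ := Finset.exists_nat_subset_range (F.image idx)
  have hinj : ∀ x ∈ F, ∀ y ∈ F, idx x = idx y → x = y := by
    intro x hx y hy hxy
    have hx' := hF x hx; have hy' := hF y hy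
    simp only [hidx] at hxy
    omega
  calc ∑ m ∈ F, (m:ℝ)^(-s)
      ≤ ∑ m ∈ F, (f (idx m) - f (idx m + 1)) := by
        apply Finset.sum_le_sum
        intro m hm
        have hm' := hF m hm
        have hc : ((idx m : ℕ) : ℝ) = (m:ℝ) - L - 1 := by
          have h0 : (0:ℤ) ≤ m - L - 1 := by omega
          have : ((m - L - 1).toNat : ℤ) = m - L - 1 := Int.toNat_of_nonneg h0
          simp only [hidx]
          exact_mod_cast congrArg (Int.cast : ℤ → ℝ) this
        have ha1 : (1:ℝ) ≤ (L:ℝ) + (idx m : ℕ) := by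
          rw [hc]
          have : (L:ℝ) + 1 ≤ (m:ℝ) := by exact_mod_cast hm'
          linarith
        have hci := CI hs ha1
        have e : f (idx m) - f (idx m + 1)
            = (((L:ℝ)+(idx m:ℕ))^(1-s) - (((L:ℝ)+(idx m:ℕ))+1)^(1-s))/(s-1) := by
          simp only [hf]; push_cast; ring_nf
        have hm2 : (m:ℝ) = ((L:ℝ)+(idx m:ℕ)) + 1 := by rw [hc]; ring
        rw [e, le_div_iff₀ hs1, hm2]
        linarith
    _ = ∑ i ∈ F.image idx, (f i - f (i + 1)) := by rw [Finset.sum_image hinj]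
    _ ≤ ∑ i ∈ Finset.range n, (f i - f (i + 1)) :=
        Finset.sum_le_sum_of_subset_of_nonneg hn (fun i _ _ => hdiff i)
    _ = f 0 - f n := Finset.sum_range_sub' f n
    _ ≤ f 0 := by linarith [hfnn n]
    _ = (L:ℝ)^(1-s)/(s-1) := by simp [hf]

lemma tail_side {s : ℝ} (hs : 1 < s) {K : ℤ} (hK : 0 ≤ K) (G : Finset ℤ)
    (hG : ∀ m ∈ G, K < m) :
    ∑ m ∈ G, jb (m:ℝ) ^ (-s) ≤ (1 + 1/(s-1) + 2^(s-1)/(s-1)) * jb (K:ℝ) ^ (1-s) := by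
  have hs1 : (0:ℝ) < s - 1 := by linarith
  have hjbK : (0:ℝ) < jb (K:ℝ) := jb_pos _
  have hjbKs : (0:ℝ) ≤ jb (K:ℝ) ^ (1-s) := Real.rpow_nonneg hjbK.le _
  have step1 : ∑ m ∈ G, jb (m:ℝ) ^ (-s) ≤ ∑ m ∈ G, (m:ℝ) ^ (-s) := by
    apply Finset.sum_le_sum
    intro m hm
    have hm1 : (1:ℤ) ≤ m := by have := hG m hm; omega
    have hm1' : (0:ℝ) < (m:ℝ) := by exact_mod_cast lt_of_lt_of_le zero_lt_one hm1
    apply Real.rpow_le_rpow_of_nonpos hm1'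
    · calc (m:ℝ) = |(m:ℝ)| := (abs_of_pos hm1').symm
        _ ≤ jb (m:ℝ) := abs_le_jb _
    · linarith
  rcases lt_or_ge 0 K with hK1 | hK0
  · -- K ≥ 1
    have hK1' : (1:ℝ) ≤ (K:ℝ) := by exact_mod_cast hK1
    have h1 : ∑ m ∈ G, (m:ℝ) ^ (-s) ≤ (K:ℝ) ^ (1-s) / (s-1) :=
      tail_pos hs hK1 G hG
    have hjb2 : jb (K:ℝ) ≤ 2*(K:ℝ) := by
      rw [jb, show 2*(K:ℝ) = Real.sqrt ((2*(K:ℝ))^2) by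
        rw [Real.sqrt_sq (by linarith)]]
      apply Real.sqrt_le_sqrt; nlinarith
    have ha : ((2:ℝ)*K) ^ (1-s) ≤ jb (K:ℝ) ^ (1-s) :=
      Real.rpow_le_rpow_of_nonpos hjbK hjb2 (by linarith)
    have hm : ((2:ℝ)*K)^(1-s) = 2^(1-s) * (K:ℝ)^(1-s) :=
      Real.mul_rpow (by norm_num) (by linarith)
    have h22 : (2:ℝ)^(s-1) * 2^(1-s) = 1 := by
      rw [← Real.rpow_add (by norm_num)]; norm_num
    have h2 : (K:ℝ) ^ (1-s) ≤ 2^(s-1) * jb (K:ℝ) ^ (1-s) := by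
      calc (K:ℝ)^(1-s) = 2^(s-1) * (2^(1-s) * (K:ℝ)^(1-s)) := by
            rw [← mul_assoc, h22, one_mul]
        _ = 2^(s-1) * ((2:ℝ)*K)^(1-s) := by rw [hm]
        _ ≤ 2^(s-1) * jb (K:ℝ)^(1-s) :=
            mul_le_mul_of_nonneg_left ha (Real.rpow_nonneg (by norm_num) _)
    have hpos : (0:ℝ) ≤ (1 + 1/(s-1)) * jb (K:ℝ) ^ (1-s) := by positivity
    calc ∑ m ∈ G, jb (m:ℝ) ^ (-s) ≤ ∑ m ∈ G, (m:ℝ) ^ (-s) := step1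
      _ ≤ (K:ℝ) ^ (1-s) / (s-1) := h1
      _ ≤ (2^(s-1) * jb (K:ℝ) ^ (1-s)) / (s-1) := by gcongr
      _ = (2^(s-1)/(s-1)) * jb (K:ℝ) ^ (1-s) := by ring
      _ ≤ (1 + 1/(s-1) + 2^(s-1)/(s-1)) * jb (K:ℝ) ^ (1-s) := by nlinarith
  · -- K = 0
    have hK0' : K = 0 := le_antisymm hK0 hK
    subst hK0'
    have hjb0 : jb ((0:ℤ):ℝ) = 1 := by simp [jb]
    rw [hjb0, Real.one_rpow, mul_one]
    have hsplit := (Finset.sum_filter_add_sum_filter_not G (fun m => 1 < m)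
      (fun m => (m:ℝ) ^ (-s))).symm
    have hfirst : ∑ m ∈ G.filter (fun m => 1 < m), (m:ℝ) ^ (-s)
        ≤ (1:ℝ)/(s-1) := by
      have := tail_pos hs (le_refl (1:ℤ)) (G.filter (fun m => 1 < m))
        (fun m hm => (Finset.mem_filter.mp hm).2)
      simpa using this
    have hsecond : ∑ m ∈ G.filter (fun m => ¬ 1 < m), (m:ℝ) ^ (-s) ≤ 1 := by
      have hsub : G.filter (fun m => ¬ 1 < m) ⊆ {1} := by
        intro m hm
        rcases Finset.mem_filter.mp hm with ⟨hmG, hm1⟩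
        have := hG m hmG
        simp only [Finset.mem_singleton]
        omega
      calc ∑ m ∈ G.filter (fun m => ¬ 1 < m), (m:ℝ) ^ (-s)
          ≤ ∑ m ∈ ({1} : Finset ℤ), (m:ℝ) ^ (-s) := by
            apply Finset.sum_le_sum_of_subset_of_nonneg hsub
            intro m hm _
            have hm1 : m = 1 := Finset.mem_singleton.mp hm
            subst hm1
            positivity
        _ = 1 := by simp [Real.one_rpow]
    have h1s : (0:ℝ) ≤ 2^(s-1)/(s-1) := by positivity
    calc ∑ m ∈ G, jb (m:ℝ) ^ (-s) ≤ ∑ m ∈ G, (m:ℝ) ^ (-s) := step1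
      _ = _ + _ := hsplit
      _ ≤ (1:ℝ)/(s-1) + 1 := add_le_add hfirst hsecond
      _ ≤ 1 + 1/(s-1) + 2^(s-1)/(s-1) := by linarith

lemma jb_neg (x : ℝ) : jb (-x) = jb x := by rw [jb, jb, neg_pow]; ring_nf

lemma tail0 {s : ℝ} (hs : 1 < s) {K : ℤ} (hK : 0 ≤ K) (G : Finset ℤ)
    (hG : ∀ m ∈ G, K < |m|) :
    ∑ m ∈ G, jb (m:ℝ) ^ (-s) ≤
      (2*(1 + 1/(s-1) + 2^(s-1)/(s-1))) * jb (K:ℝ) ^ (1-s) := by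
  have hsplit := (Finset.sum_filter_add_sum_filter_not G (fun m => 0 < m)
    (fun m => jb (m:ℝ) ^ (-s))).symm
  have hpos : ∑ m ∈ G.filter (fun m => 0 < m), jb (m:ℝ) ^ (-s)
      ≤ (1 + 1/(s-1) + 2^(s-1)/(s-1)) * jb (K:ℝ) ^ (1-s) := by
    apply tail_side hs hK
    intro m hm
    rcases Finset.mem_filter.mp hm with ⟨hmG, hm0⟩
    have h := hG m hmG
    rwa [abs_of_pos hm0] at h
  have hneg : ∑ m ∈ G.filter (fun m => ¬ 0 < m), jb (m:ℝ) ^ (-s)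
      ≤ (1 + 1/(s-1) + 2^(s-1)/(s-1)) * jb (K:ℝ) ^ (1-s) := by
    have hinj : ∀ x ∈ G.filter (fun m => ¬ 0 < m), ∀ y ∈ G.filter (fun m => ¬ 0 < m),
        -x = -y → x = y := by intro x _ y _ h; omega
    have heq : ∑ m ∈ (G.filter (fun m => ¬ 0 < m)).image (fun m => -m),
        jb (m:ℝ) ^ (-s) = ∑ m ∈ G.filter (fun m => ¬ 0 < m), jb (m:ℝ) ^ (-s) := by
      rw [Finset.sum_image hinj]
      apply Finset.sum_congr rfl
      intro m _
      rw [show ((-m : ℤ):ℝ) = -(m:ℝ) by push_cast; ring, jb_neg]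
    rw [← heq]
    apply tail_side hs hK
    intro x hx
    rcases Finset.mem_image.mp hx with ⟨m, hm, rfl⟩
    rcases Finset.mem_filter.mp hm with ⟨hmG, hm0⟩
    have h := hG m hmG
    rw [abs_of_nonpos (le_of_not_gt hm0)] at h
    omega
  calc ∑ m ∈ G, jb (m:ℝ) ^ (-s) = _ + _ := hsplit
    _ ≤ _ := add_le_add hpos hneg
    _ = (2*(1 + 1/(s-1) + 2^(s-1)/(s-1))) * jb (K:ℝ) ^ (1-s) := by ring


lemma phiB_nonneg (β : ℝ) (k : ℤ) : 0 ≤ phiB β k := by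
  apply Finset.sum_nonneg
  intro n _
  exact Real.rpow_nonneg (jb_nonneg _) _

lemma jb_rpow_le_phiB (β : ℝ) (hβ : 0 ≤ β) (k : ℤ) :
    jb ((|k| : ℤ):ℝ) ^ (1-β) ≤ phiB β k := by
  set K := |k| with hKdef
  have hK0 : 0 ≤ K := abs_nonneg k
  have hKr : (0:ℝ) ≤ (K:ℝ) := by exact_mod_cast hK0
  have hjbK : (0:ℝ) < jb (K:ℝ) := jb_pos _
  have hterm : ∀ n ∈ Finset.Icc (-K) K, jb (K:ℝ) ^ (-β) ≤ jb (n:ℝ) ^ (-β) := by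
    intro n hn
    rcases Finset.mem_Icc.mp hn with ⟨h1, h2⟩
    have habs : |(n:ℝ)| ≤ |(K:ℝ)| := by
      rw [abs_of_nonneg hKr]
      have h3 : |n| ≤ K := abs_le.mpr ⟨h1, h2⟩
      calc |(n:ℝ)| = ((|n| : ℤ):ℝ) := by rw [Int.cast_abs]
        _ ≤ (K:ℝ) := by exact_mod_cast h3
    exact Real.rpow_le_rpow_of_nonpos (jb_pos _) (jb_mono habs)
      (neg_nonpos.mpr hβ)
  have hcard : ((Finset.Icc (-K) K).card : ℝ) = 2*(K:ℝ)+1 := by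
    rw [Int.card_Icc, show K + 1 - (-K) = 2*K+1 by ring]
    have h1 : ((2*K+1).toNat : ℤ) = 2*K+1 := Int.toNat_of_nonneg (by omega)
    have h2 : (((2*K+1).toNat : ℤ) : ℝ) = ((2*K+1 : ℤ) : ℝ) := by rw [h1]
    push_cast at h2 ⊢
    linarith
  have hsum : ((Finset.Icc (-K) K).card : ℝ) * jb (K:ℝ) ^ (-β) ≤ phiB β k := by
    rw [phiB, ← hKdef]
    calc ((Finset.Icc (-K) K).card : ℝ) * jb (K:ℝ) ^ (-β)
        = ∑ _n ∈ Finset.Icc (-K) K, jb (K:ℝ) ^ (-β) := by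
          rw [Finset.sum_const, nsmul_eq_mul]
      _ ≤ ∑ n ∈ Finset.Icc (-K) K, jb (n:ℝ) ^ (-β) := Finset.sum_le_sum hterm
  have hjble : jb (K:ℝ) ≤ 2*(K:ℝ)+1 := by
    rw [jb, show 2*(K:ℝ)+1 = Real.sqrt ((2*(K:ℝ)+1)^2) by
      rw [Real.sqrt_sq (by linarith)]]
    apply Real.sqrt_le_sqrt
    nlinarith
  have hexp : jb (K:ℝ) ^ (1-β) = jb (K:ℝ) * jb (K:ℝ) ^ (-β) := by
    rw [show (1:ℝ)-β = 1 + (-β) by ring, Real.rpow_add hjbK, Real.rpow_one]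
  calc jb (K:ℝ) ^ (1-β) = jb (K:ℝ) * jb (K:ℝ) ^ (-β) := hexp
    _ ≤ (2*(K:ℝ)+1) * jb (K:ℝ) ^ (-β) :=
        mul_le_mul_of_nonneg_right hjble (Real.rpow_nonneg hjbK.le _)
    _ = ((Finset.Icc (-K) K).card : ℝ) * jb (K:ℝ) ^ (-β) := by rw [hcard]
    _ ≤ phiB β k := hsum

lemma if_nonneg' {P : Prop} [Decidable P] {x : ℝ} (hx : 0 ≤ x) :
    0 ≤ (if P then x else 0) := by split <;> simp [hx]

lemma rpow_half_le {γ : ℝ} (hγ : 0 ≤ γ) {u v : ℝ} (hu : 0 < u) (hv : 0 < v)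
    (h : u ≤ 2 * v) : v ^ (-γ) ≤ 2^γ * u ^ (-γ) := by
  have h1 : v ^ (-γ) ≤ (u/2) ^ (-γ) :=
    Real.rpow_le_rpow_of_nonpos (by positivity) (by linarith) (by linarith)
  have h2 : ((u:ℝ)/2) ^ (-γ) = u ^ (-γ) / 2 ^ (-γ) :=
    Real.div_rpow hu.le (by norm_num : (0:ℝ) ≤ 2) (-γ)
  have h3 : (2:ℝ) ^ (-γ) = ((2:ℝ)^γ)⁻¹ := Real.rpow_neg (by norm_num) γ
  calc v ^ (-γ) ≤ (u/2) ^ (-γ) := h1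
    _ = u ^ (-γ) / ((2:ℝ)^γ)⁻¹ := by rw [h2, h3]
    _ = 2^γ * u ^ (-γ) := by
        rw [div_inv_eq_mul]; ring

lemma key {β γ : ℝ} (hγ : 0 ≤ γ) (hβγ : γ ≤ β) {K A B : ℤ} (hK0 : 0 ≤ K)
    (hK : K ≤ |A| + |B|) :
    jb (A:ℝ) ^ (-β) * jb (B:ℝ) ^ (-γ) ≤
      2^γ * jb (K:ℝ) ^ (-γ) *
        ((if |A| ≤ K then jb (A:ℝ) ^ (-β) else 0)
          + (if |B| ≤ K then jb (B:ℝ) ^ (-β) else 0))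
      + ((if K < |A| then jb (A:ℝ) ^ (-(β+γ)) else 0)
          + (if K < |B| then jb (B:ℝ) ^ (-(β+γ)) else 0)) := by
  have hβ : 0 ≤ β := le_trans hγ hβγ
  have ha0 : (0:ℝ) < jb (A:ℝ) := jb_pos _
  have hb0 : (0:ℝ) < jb (B:ℝ) := jb_pos _
  have hk0 : (0:ℝ) < jb (K:ℝ) := jb_pos _
  have habsA : |(A:ℝ)| = ((|A| : ℤ) : ℝ) := (Int.cast_abs ..).symm
  have habsB : |(B:ℝ)| = ((|B| : ℤ) : ℝ) := (Int.cast_abs ..).symm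
  have habsK : |(K:ℝ)| = (K : ℝ) := abs_of_nonneg (by exact_mod_cast hK0)
  -- nonnegativity of all pieces
  have hifA : 0 ≤ (if |A| ≤ K then jb (A:ℝ) ^ (-β) else 0) :=
    if_nonneg' (Real.rpow_nonneg ha0.le _)
  have hifB : 0 ≤ (if |B| ≤ K then jb (B:ℝ) ^ (-β) else 0) :=
    if_nonneg' (Real.rpow_nonneg hb0.le _)
  have hifA' : 0 ≤ (if K < |A| then jb (A:ℝ) ^ (-(β+γ)) else 0) :=
    if_nonneg' (Real.rpow_nonneg ha0.le _)
  have hifB' : 0 ≤ (if K < |B| then jb (B:ℝ) ^ (-(β+γ)) else 0) :=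
    if_nonneg' (Real.rpow_nonneg hb0.le _)
  have hc0 : (0:ℝ) ≤ 2^γ * jb (K:ℝ) ^ (-γ) := by positivity
  rcases le_total |A| |B| with hAB | hAB
  · -- |A| ≤ |B|, so K ≤ 2|B|
    have hkb : jb (K:ℝ) ≤ 2 * jb (B:ℝ) := by
      apply jb_le_two_mul
      rw [habsK, habsB]
      have : (K:ℝ) ≤ 2 * ((|B| : ℤ):ℝ) := by exact_mod_cast (by omega : K ≤ 2 * |B|)
      exact this
    have hgb : jb (B:ℝ) ^ (-γ) ≤ 2^γ * jb (K:ℝ) ^ (-γ) := rpow_half_le hγ hk0 hb0 hkb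
    rcases le_or_gt |A| K with h1 | h1
    · -- main term 1
      rw [if_pos h1]
      have hmain : jb (A:ℝ) ^ (-β) * jb (B:ℝ) ^ (-γ)
          ≤ 2^γ * jb (K:ℝ) ^ (-γ) * jb (A:ℝ) ^ (-β) := by
        calc jb (A:ℝ) ^ (-β) * jb (B:ℝ) ^ (-γ)
            ≤ jb (A:ℝ) ^ (-β) * (2^γ * jb (K:ℝ) ^ (-γ)) :=
              mul_le_mul_of_nonneg_left hgb (Real.rpow_nonneg ha0.le _)
          _ = 2^γ * jb (K:ℝ) ^ (-γ) * jb (A:ℝ) ^ (-β) := by ring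
      have hexp : 2^γ * jb (K:ℝ) ^ (-γ) * (jb (A:ℝ) ^ (-β)
            + (if |B| ≤ K then jb (B:ℝ) ^ (-β) else 0))
          = 2^γ * jb (K:ℝ) ^ (-γ) * jb (A:ℝ) ^ (-β)
            + 2^γ * jb (K:ℝ) ^ (-γ) * (if |B| ≤ K then jb (B:ℝ) ^ (-β) else 0) := by
        ring
      nlinarith [mul_nonneg hc0 hifB]
    · -- tail term 1 : K < |A| ≤ |B|
      have h2 : K < |B| := lt_of_lt_of_le h1 hAB
      rw [if_pos h1]
      have hab : jb (A:ℝ) ≤ jb (B:ℝ) := by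
        apply jb_mono; rw [habsA, habsB]; exact_mod_cast hAB
      have hga : jb (B:ℝ) ^ (-γ) ≤ jb (A:ℝ) ^ (-γ) :=
        Real.rpow_le_rpow_of_nonpos ha0 hab (by linarith)
      have hmain : jb (A:ℝ) ^ (-β) * jb (B:ℝ) ^ (-γ) ≤ jb (A:ℝ) ^ (-(β+γ)) := by
        calc jb (A:ℝ) ^ (-β) * jb (B:ℝ) ^ (-γ)
            ≤ jb (A:ℝ) ^ (-β) * jb (A:ℝ) ^ (-γ) :=
              mul_le_mul_of_nonneg_left hga (Real.rpow_nonneg ha0.le _)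
          _ = jb (A:ℝ) ^ (-(β+γ)) := by
              rw [← Real.rpow_add ha0]; ring_nf
      nlinarith [mul_nonneg hc0 (add_nonneg hifA hifB)]
  · -- |B| ≤ |A|, so K ≤ 2|A|
    have hka : jb (K:ℝ) ≤ 2 * jb (A:ℝ) := by
      apply jb_le_two_mul
      rw [habsK, habsA]
      have : (K:ℝ) ≤ 2 * ((|A| : ℤ):ℝ) := by exact_mod_cast (by omega : K ≤ 2 * |A|)
      exact this
    have hba : jb (B:ℝ) ≤ jb (A:ℝ) := by
      apply jb_mono; rw [habsA, habsB]; exact_mod_cast hAB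
    rcases le_or_gt |B| K with h1 | h1
    · -- main term 2
      rw [if_pos h1]
      have hga : jb (A:ℝ) ^ (-γ) ≤ 2^γ * jb (K:ℝ) ^ (-γ) := rpow_half_le hγ hk0 ha0 hka
      have hsplitA : jb (A:ℝ) ^ (-β) = jb (A:ℝ) ^ (-γ) * jb (A:ℝ) ^ (-(β-γ)) := by
        rw [← Real.rpow_add ha0]; ring_nf
      have hmono : jb (A:ℝ) ^ (-(β-γ)) ≤ jb (B:ℝ) ^ (-(β-γ)) :=
        Real.rpow_le_rpow_of_nonpos hb0 hba (by linarith)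
      have hcombB : jb (B:ℝ) ^ (-(β-γ)) * jb (B:ℝ) ^ (-γ) = jb (B:ℝ) ^ (-β) := by
        rw [← Real.rpow_add hb0]; ring_nf
      have hmain : jb (A:ℝ) ^ (-β) * jb (B:ℝ) ^ (-γ)
          ≤ 2^γ * jb (K:ℝ) ^ (-γ) * jb (B:ℝ) ^ (-β) := by
        calc jb (A:ℝ) ^ (-β) * jb (B:ℝ) ^ (-γ)
            = (jb (A:ℝ) ^ (-γ) * jb (A:ℝ) ^ (-(β-γ))) * jb (B:ℝ) ^ (-γ) := by
              rw [← hsplitA]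
          _ ≤ (2^γ * jb (K:ℝ) ^ (-γ) * jb (B:ℝ) ^ (-(β-γ))) * jb (B:ℝ) ^ (-γ) := by
              apply mul_le_mul_of_nonneg_right _ (Real.rpow_nonneg hb0.le _)
              apply mul_le_mul hga hmono (Real.rpow_nonneg ha0.le _) hc0
          _ = 2^γ * jb (K:ℝ) ^ (-γ) * (jb (B:ℝ) ^ (-(β-γ)) * jb (B:ℝ) ^ (-γ)) := by
              ring
          _ = 2^γ * jb (K:ℝ) ^ (-γ) * jb (B:ℝ) ^ (-β) := by rw [hcombB]
      nlinarith [mul_nonneg hc0 hifA]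
    · -- tail term 2 : K < |B| ≤ |A|
      have h2 : K < |A| := lt_of_lt_of_le h1 hAB
      rw [if_pos h1]
      have hgb2 : jb (A:ℝ) ^ (-β) ≤ jb (B:ℝ) ^ (-β) :=
        Real.rpow_le_rpow_of_nonpos hb0 hba (by linarith)
      have hmain : jb (A:ℝ) ^ (-β) * jb (B:ℝ) ^ (-γ) ≤ jb (B:ℝ) ^ (-(β+γ)) := by
        calc jb (A:ℝ) ^ (-β) * jb (B:ℝ) ^ (-γ)
            ≤ jb (B:ℝ) ^ (-β) * jb (B:ℝ) ^ (-γ) :=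
              mul_le_mul_of_nonneg_right hgb2 (Real.rpow_nonneg hb0.le _)
          _ = jb (B:ℝ) ^ (-(β+γ)) := by rw [← Real.rpow_add hb0]; ring_nf
      nlinarith [mul_nonneg hc0 (add_nonneg hifA hifB)]

lemma sum_if_phi (β : ℝ) {K : ℤ} (c : ℤ) (F : Finset ℤ) :
    ∑ n ∈ F, (if |n - c| ≤ K then jb (((n - c : ℤ)):ℝ) ^ (-β) else 0)
      ≤ ∑ m ∈ Finset.Icc (-K) K, jb (m:ℝ) ^ (-β) := by
  rw [← Finset.sum_filter]
  have hinj : ∀ x ∈ F.filter (fun n => |n - c| ≤ K),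
      ∀ y ∈ F.filter (fun n => |n - c| ≤ K), x - c = y - c → x = y := by
    intro x _ y _ h; omega
  rw [show ∑ n ∈ F.filter (fun n => |n - c| ≤ K), jb (((n - c : ℤ)):ℝ) ^ (-β)
      = ∑ m ∈ (F.filter (fun n => |n - c| ≤ K)).image (fun n => n - c),
          jb ((m:ℤ):ℝ) ^ (-β) by rw [Finset.sum_image hinj]]
  apply Finset.sum_le_sum_of_subset_of_nonneg
  · intro m hm
    rcases Finset.mem_image.mp hm with ⟨n, hn, rfl⟩
    have := (Finset.mem_filter.mp hn).2
    exact Finset.mem_Icc.mpr (abs_le.mp this)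
  · intro m _ _
    exact Real.rpow_nonneg (jb_nonneg _) _

lemma sum_if_tail {s : ℝ} (hs : 1 < s) {K : ℤ} (hK : 0 ≤ K) (c : ℤ) (F : Finset ℤ) :
    ∑ n ∈ F, (if K < |n - c| then jb (((n - c : ℤ)):ℝ) ^ (-s) else 0)
      ≤ (2*(1 + 1/(s-1) + 2^(s-1)/(s-1))) * jb (K:ℝ) ^ (1-s) := by
  rw [← Finset.sum_filter]
  have hinj : ∀ x ∈ F.filter (fun n => K < |n - c|),
      ∀ y ∈ F.filter (fun n => K < |n - c|), x - c = y - c → x = y := by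
    intro x _ y _ h; omega
  rw [show ∑ n ∈ F.filter (fun n => K < |n - c|), jb (((n - c : ℤ)):ℝ) ^ (-s)
      = ∑ m ∈ (F.filter (fun n => K < |n - c|)).image (fun n => n - c),
          jb ((m:ℤ):ℝ) ^ (-s) by rw [Finset.sum_image hinj]]
  apply tail0 hs hK
  intro m hm
  rcases Finset.mem_image.mp hm with ⟨n, hn, rfl⟩
  exact (Finset.mem_filter.mp hn).2

theorem stmt0 (β γ : ℝ) (hγ : 0 ≤ γ) (hβγ : γ ≤ β) (hsum : 1 < β + γ) :
    ∃ C > 0, ∀ (k₁ k₂ : ℤ) (F : Finset ℤ),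
      ∑ n ∈ F, jb ((n : ℝ) - k₁) ^ (-β) * jb ((n : ℝ) - k₂) ^ (-γ)
        ≤ C * phiB β (k₁ - k₂) / jb ((k₁ : ℝ) - k₂) ^ γ := by
  set s : ℝ := β + γ with hsdef
  have hs1 : (0:ℝ) < s - 1 := by linarith
  set Ct : ℝ := 2*(1 + 1/(s-1) + 2^(s-1)/(s-1)) with hCt
  have hCt0 : 0 < Ct := by positivity
  refine ⟨2^(γ+1) + 2*Ct, by positivity, ?_⟩
  intro k₁ k₂ F
  set K : ℤ := |k₁ - k₂| with hKdef
  have hK0 : (0:ℤ) ≤ K := abs_nonneg _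
  have hjbk : jb ((k₁:ℝ) - k₂) = jb (K:ℝ) := by
    rw [hKdef, Int.cast_abs, show ((k₁ - k₂ : ℤ):ℝ) = (k₁:ℝ) - k₂ by push_cast; ring,
      jb_abs]
  have hjbK0 : (0:ℝ) < jb (K:ℝ) := jb_pos _
  have hXnn : (0:ℝ) ≤ jb (K:ℝ) ^ (-γ) := Real.rpow_nonneg hjbK0.le _
  have hφ : jb (K:ℝ) ^ (1-β) ≤ phiB β (k₁ - k₂) := by
    have := jb_rpow_le_phiB β (le_trans hγ hβγ) (k₁ - k₂)
    rwa [← hKdef] at this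
  have hφ0 : 0 ≤ phiB β (k₁ - k₂) := phiB_nonneg _ _
  -- pointwise bound summed
  have hstep : ∑ n ∈ F, jb ((n : ℝ) - k₁) ^ (-β) * jb ((n : ℝ) - k₂) ^ (-γ)
      ≤ ∑ n ∈ F, (2^γ * jb (K:ℝ) ^ (-γ) *
          ((if |n - k₁| ≤ K then jb (((n - k₁ : ℤ)):ℝ) ^ (-β) else 0)
            + (if |n - k₂| ≤ K then jb (((n - k₂ : ℤ)):ℝ) ^ (-β) else 0))
        + ((if K < |n - k₁| then jb (((n - k₁ : ℤ)):ℝ) ^ (-(β+γ)) else 0)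
            + (if K < |n - k₂| then jb (((n - k₂ : ℤ)):ℝ) ^ (-(β+γ)) else 0))) := by
    apply Finset.sum_le_sum
    intro n _
    have hcast1 : ((n - k₁ : ℤ):ℝ) = (n:ℝ) - k₁ := by push_cast; ring
    have hcast2 : ((n - k₂ : ℤ):ℝ) = (n:ℝ) - k₂ := by push_cast; ring
    have hKle : K ≤ |n - k₁| + |n - k₂| := by
      have h1 : K = |(n - k₁) - (n - k₂)| := by
        rw [hKdef, show (n - k₁) - (n - k₂) = -(k₁ - k₂) by ring, abs_neg]
      rw [h1]
      exact abs_sub _ _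
    rw [show (n:ℝ) - k₁ = ((n - k₁:ℤ):ℝ) from hcast1.symm,
      show (n:ℝ) - k₂ = ((n - k₂:ℤ):ℝ) from hcast2.symm]
    exact key hγ hβγ hK0 hKle (A := n - k₁) (B := n - k₂)
  -- split the sums
  have hsplit : ∑ n ∈ F, (2^γ * jb (K:ℝ) ^ (-γ) *
          ((if |n - k₁| ≤ K then jb (((n - k₁ : ℤ)):ℝ) ^ (-β) else 0)
            + (if |n - k₂| ≤ K then jb (((n - k₂ : ℤ)):ℝ) ^ (-β) else 0))
        + ((if K < |n - k₁| then jb (((n - k₁ : ℤ)):ℝ) ^ (-(β+γ)) else 0)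
            + (if K < |n - k₂| then jb (((n - k₂ : ℤ)):ℝ) ^ (-(β+γ)) else 0)))
      = 2^γ * jb (K:ℝ) ^ (-γ) *
          ((∑ n ∈ F, (if |n - k₁| ≤ K then jb (((n - k₁ : ℤ)):ℝ) ^ (-β) else 0))
            + ∑ n ∈ F, (if |n - k₂| ≤ K then jb (((n - k₂ : ℤ)):ℝ) ^ (-β) else 0))
        + ((∑ n ∈ F, (if K < |n - k₁| then jb (((n - k₁ : ℤ)):ℝ) ^ (-(β+γ)) else 0))
            + ∑ n ∈ F, (if K < |n - k₂| then jb (((n - k₂ : ℤ)):ℝ) ^ (-(β+γ)) else 0)) := by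
    rw [Finset.sum_add_distrib, Finset.sum_add_distrib, ← Finset.mul_sum,
      Finset.sum_add_distrib]
  have hS1 := sum_if_phi β (K := K) k₁ F
  have hS2 := sum_if_phi β (K := K) k₂ F
  have hT1 : ∑ n ∈ F, (if K < |n - k₁| then jb (((n - k₁ : ℤ)):ℝ) ^ (-(β+γ)) else 0)
      ≤ Ct * jb (K:ℝ) ^ (1-s) := by
    have := sum_if_tail (s := s) (by linarith) hK0 k₁ F
    rw [hCt]
    convert this using 3 <;> rw [hsdef]
  have hT2 : ∑ n ∈ F, (if K < |n - k₂| then jb (((n - k₂ : ℤ)):ℝ) ^ (-(β+γ)) else 0)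
      ≤ Ct * jb (K:ℝ) ^ (1-s) := by
    have := sum_if_tail (s := s) (by linarith) hK0 k₂ F
    rw [hCt]
    convert this using 3 <;> rw [hsdef]
  have hphi_eq : ∑ m ∈ Finset.Icc (-K) K, jb (m:ℝ) ^ (-β) = phiB β (k₁ - k₂) := by
    rw [phiB, ← hKdef]
  rw [hphi_eq] at hS1 hS2
  -- 1 - s = -γ + (1 - β)
  have hfac : jb (K:ℝ) ^ (1-s) = jb (K:ℝ) ^ (-γ) * jb (K:ℝ) ^ (1-β) := by
    rw [← Real.rpow_add hjbK0, hsdef]; ring_nf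
  have htail : Ct * jb (K:ℝ) ^ (1-s) ≤ Ct * (jb (K:ℝ) ^ (-γ) * phiB β (k₁ - k₂)) := by
    rw [hfac]
    apply mul_le_mul_of_nonneg_left _ hCt0.le
    exact mul_le_mul_of_nonneg_left hφ hXnn
  have h2γ : (2:ℝ)^(γ+1) = 2^γ * 2 := by
    rw [Real.rpow_add (by norm_num : (0:ℝ) < 2), Real.rpow_one]
  have hgoal : (2^(γ+1) + 2*Ct) * phiB β (k₁ - k₂) / jb ((k₁:ℝ) - k₂) ^ γ
      = (2^(γ+1) + 2*Ct) * phiB β (k₁ - k₂) * jb (K:ℝ) ^ (-γ) := by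
    rw [hjbk, Real.rpow_neg hjbK0.le, div_eq_mul_inv]
  rw [hgoal]
  have h2γ0 : (0:ℝ) ≤ (2:ℝ)^γ := Real.rpow_nonneg (by norm_num) _
  calc ∑ n ∈ F, jb ((n : ℝ) - k₁) ^ (-β) * jb ((n : ℝ) - k₂) ^ (-γ)
      ≤ _ := hstep
    _ = _ := hsplit
    _ ≤ 2^γ * jb (K:ℝ) ^ (-γ) * (phiB β (k₁ - k₂) + phiB β (k₁ - k₂))
        + (Ct * (jb (K:ℝ) ^ (-γ) * phiB β (k₁ - k₂))
          + Ct * (jb (K:ℝ) ^ (-γ) * phiB β (k₁ - k₂))) := by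
        apply add_le_add
        · apply mul_le_mul_of_nonneg_left (add_le_add hS1 hS2) (by positivity)
        · exact add_le_add (le_trans hT1 htail) (le_trans hT2 htail)
    _ = (2^(γ+1) + 2*Ct) * phiB β (k₁ - k₂) * jb (K:ℝ) ^ (-γ) := by
        rw [h2γ]; ring
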